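/- Let R be a ring, f : Y → X a homomorphism of left R-modules, and F an additive covariant functor with componentwise exact presentation Hom(X,-) → Hom(Y,-) → F → 0, the first map being composition with f. Then ker f = 0 (the defect of F is zero) if and only if F(I) = 0 for every injective left R-module I (the functor vanishes on injectives). -/

import Mathlib

open CategoryTheory Opposite

universe u

/-- if the additive functor `F` has a componentwise exact presentation
`Hom(X,-) → Hom(Y,-) → F → 0` with first map given by composition with `f : Y → X`,
then the defect `ker f` is zero if and only if `F` vanishes on all injective modules. -/
theorem statement7 (R : Type u) [Ring R] (X Y : ModuleCat.{u} R) (f : Y ⟶ X)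
    (F : ModuleCat.{u} R ⥤ AddCommGrpCat.{u}) [F.Additive]
    (π : preadditiveCoyoneda.obj (op Y) ⟶ F)
    (hsurj : ∀ M : ModuleCat.{u} R, Function.Surjective (π.app M))
    (hexact : ∀ (M : ModuleCat.{u} R) (g : Y ⟶ M),
      π.app M g = 0 ↔ ∃ h : X ⟶ M, f ≫ h = g) :
    LinearMap.ker f.hom = ⊥ ↔
      ∀ I : ModuleCat.{u} R, Module.Injective R I → ∀ x : F.obj I, x = 0 := by
  rw [LinearMap.ker_eq_bot]
  constructor
  · intro hf I hI x
    obtain ⟨g, rfl⟩ := hsurj I x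
    refine (hexact I g).mpr ?_
    obtain ⟨h, hh⟩ := hI.out f.hom hf g.hom
    exact ⟨ModuleCat.ofHom h, ModuleCat.hom_ext (LinearMap.ext hh)⟩
  · intro hF
    have : EnoughInjectives (ModuleCat.{u} R) := inferInstance
    set I := Injective.under Y with hIdef
    have hinjI : Module.Injective R I := by
      have : CategoryTheory.Injective (ModuleCat.of R I) := by
        simpa using (inferInstance : CategoryTheory.Injective I)
      exact Module.injective_module_of_injective_object R I
    have hπ : π.app I (Injective.ι Y) = 0 := hF I hinjI _
    obtain ⟨h, hh⟩ := (hexact I (Injective.ι Y)).mp hπ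
    have hι : Function.Injective (Injective.ι Y) :=
      (ModuleCat.mono_iff_injective _).mp inferInstance
    intro a b hab
    apply hι
    rw [← hh]
    show (h.hom ∘ₗ f.hom) a = (h.hom ∘ₗ f.hom) b
    simp only [LinearMap.comp_apply]
    exact congrArg h hab
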